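/- For n ≥ 2 and 1 ≤ r < n, the short exact sequence 0 → Λ^r(Aug(ℂ^n)) → Λ^r(ℂ^n) → Λ^{r−1}(Aug(ℂ^n)) → 0 of ℂ[T_n]-modules does not split; equivalently, Λ^r(Aug(ℂ^n)) is not a direct summand of Λ^r(ℂ^n) as a ℂ[T_n]-module. -/

import Mathlib

open Finset in
/-- The natural representation of the full transformation monoid `Function.End (Fin n)`
on `ℂ^n`, determined by `f · v_i = v_{f i}` on the standard basis. -/
noncomputable def natRep (n : ℕ) :
    Representation ℂ (Function.End (Fin n)) (Fin n → ℂ) where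
  toFun f :=
    { toFun := fun x j => ∑ i, if f i = j then x i else 0
      map_add' := by
        intro x y
        funext j
        simp only [Pi.add_apply]
        rw [← Finset.sum_add_distrib]
        congr 1; funext i; split <;> simp
      map_smul' := by
        intro c x
        funext j
        simp [Finset.mul_sum, apply_ite (fun t => c * t)] }
  map_one' := by
    refine LinearMap.ext fun x => funext fun j => ?_
    show (∑ i, if (1 : Function.End (Fin n)) i = j then x i else 0) = x j
    have h : ∀ i : Fin n, (1 : Function.End (Fin n)) i = i := fun _ => rfl
    simp only [h]
    rw [Finset.sum_ite_eq' Finset.univ j x]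
    simp
  map_mul' := by
    intro f g
    refine LinearMap.ext fun x => funext fun j => ?_
    show (∑ i, if f (g i) = j then x i else 0)
        = ∑ k, if f k = j then ∑ i, if g i = k then x i else 0 else 0
    have key : ∀ k, (if f k = j then ∑ i, if g i = k then x i else 0 else 0)
        = ∑ i, if g i = k then (if f k = j then x i else 0) else 0 := by
      intro k; split
      · rfl
      · simp
    rw [Finset.sum_congr rfl (fun k _ => key k), Finset.sum_comm]
    refine Finset.sum_congr rfl fun i _ => ?_
    rw [Finset.sum_ite_eq Finset.univ (g i) (fun k => if f k = j then x i else 0)]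
    simp

lemma sum_natRep (n : ℕ) (f : Function.End (Fin n)) (x : Fin n → ℂ) :
    ∑ j, natRep n f x j = ∑ i, x i := by
  show ∑ j, ∑ i, (if f i = j then x i else 0) = _
  rw [Finset.sum_comm]
  simp [Finset.sum_ite_eq' Finset.univ]

/-- The augmentation submodule `Aug(ℂ^n)` of the natural module: vectors whose
coordinates sum to zero. -/
noncomputable def Aug (n : ℕ) : Submodule ℂ (Fin n → ℂ) where
  carrier := {x | ∑ i, x i = 0}
  add_mem' := by intro a b ha hb; simp_all [Finset.sum_add_distrib]
  zero_mem' := by simp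
  smul_mem' := by intro c a ha; simp_all [← Finset.mul_sum]

lemma natRep_mem_aug (n : ℕ) (f : Function.End (Fin n)) {x : Fin n → ℂ}
    (hx : x ∈ Aug n) : natRep n f x ∈ Aug n := by
  have : ∑ j, natRep n f x j = 0 := by rw [sum_natRep]; exact hx
  exact this

/-- The representation of the full transformation monoid on the augmentation submodule. -/
noncomputable def augRep (n : ℕ) : Representation ℂ (Function.End (Fin n)) (Aug n) where
  toFun f := (natRep n f).restrict (p := Aug n) (q := Aug n) (fun _ hx => natRep_mem_aug n f hx)
  map_one' := by
    refine LinearMap.ext fun x => Subtype.ext ?_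
    simp [LinearMap.restrict_apply]
  map_mul' := by
    intro f g
    refine LinearMap.ext fun x => Subtype.ext ?_
    simp [LinearMap.restrict_apply]

lemma extAlg_map_mem {R M N : Type} [CommRing R] [AddCommGroup M] [Module R M]
    [AddCommGroup N] [Module R N] (r : ℕ) (f : M →ₗ[R] N) {x : ExteriorAlgebra R M}
    (hx : x ∈ ⋀[R]^r M) : ExteriorAlgebra.map f x ∈ ⋀[R]^r N := by
  rw [← ExteriorAlgebra.ιMulti_span_fixedDegree] at hx ⊢
  induction hx using Submodule.span_induction with
  | mem y hy =>
      obtain ⟨v, rfl⟩ := hy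
      rw [ExteriorAlgebra.map_apply_ιMulti]
      exact Submodule.subset_span ⟨f ∘ v, rfl⟩
  | zero => simp
  | add y z _ _ hy hz => rw [map_add]; exact Submodule.add_mem _ hy hz
  | smul c y _ hy => rw [map_smul]; exact Submodule.smul_mem _ c hy

/-- The linear map between `r`-th exterior powers induced by a linear map. -/
noncomputable def extMap {R M N : Type} [CommRing R] [AddCommGroup M] [Module R M]
    [AddCommGroup N] [Module R N] (r : ℕ) (f : M →ₗ[R] N) :
    ⋀[R]^r M →ₗ[R] ⋀[R]^r N :=
  (ExteriorAlgebra.map f).toLinearMap.restrict (p := ⋀[R]^r M) (q := ⋀[R]^r N)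
    (fun _ hx => extAlg_map_mem r f hx)

/-- The representation of the full transformation monoid on the `r`-th exterior power
of the natural module, by the diagonal action on wedge products. -/
noncomputable def extRep (n r : ℕ) :
    Representation ℂ (Function.End (Fin n)) (⋀[ℂ]^r (Fin n → ℂ)) where
  toFun f := extMap r (natRep n f)
  map_one' := by
    refine LinearMap.ext fun x => Subtype.ext ?_
    simp [extMap, LinearMap.restrict_apply, map_one, Module.End.one_eq_id,
      ExteriorAlgebra.map_id]
  map_mul' := by
    intro f g
    refine LinearMap.ext fun x => Subtype.ext ?_
    simp only [extMap, LinearMap.restrict_apply, map_mul, Module.End.mul_eq_comp,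
      ← ExteriorAlgebra.map_comp_map]
    rfl

set_option synthInstance.maxHeartbeats 1000000 in
/-- The representation of the full transformation monoid on the `r`-th exterior power
of the augmentation submodule. -/
noncomputable def extAugRep (n r : ℕ) :
    Representation ℂ (Function.End (Fin n)) (⋀[ℂ]^r ↥(Aug n)) where
  toFun f := extMap r (augRep n f)
  map_one' := by
    refine LinearMap.ext fun x => Subtype.ext ?_
    simp [extMap, LinearMap.restrict_apply, map_one, Module.End.one_eq_id,
      ExteriorAlgebra.map_id]
  map_mul' := by
    intro f g
    refine LinearMap.ext fun x => Subtype.ext ?_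
    simp only [extMap, LinearMap.restrict_apply, map_mul, Module.End.mul_eq_comp,
      ← ExteriorAlgebra.map_comp_map]
    rfl

/-- The idempotent `e_m ∈ T_n` fixing the first `m` points and sending all other
points to the first point. -/
def eIdem (n m : ℕ) : Function.End (Fin n) :=
  fun i => if h : (i : ℕ) < m then i else ⟨0, i.pos⟩

/-- The embedding of the symmetric group `S_r` into `T_n` as the maximal subgroup
at the idempotent `eIdem n r` (elements `g` with `e g e = g` invertible in `e T_n e`). -/
def permEmbed (n r : ℕ) (hr : 1 ≤ r) (hrn : r ≤ n) (σ : Equiv.Perm (Fin r)) :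
    Function.End (Fin n) :=
  fun i => Fin.castLE hrn (σ (if hi : (i : ℕ) < r then ⟨i, hi⟩ else ⟨0, hr⟩))

/-- The idempotent `η = (1/r!) ∑_{g ∈ G} sgn(g|_{[r]}) g` of the monoid algebra,
where `G ≅ S_r` is the maximal subgroup at `eIdem n r`. -/
noncomputable def eta (n r : ℕ) (hr : 1 ≤ r) (hrn : r ≤ n) :
    MonoidAlgebra ℂ (Function.End (Fin n)) :=
  (r.factorial : ℂ)⁻¹ • ∑ σ : Equiv.Perm (Fin r),
    MonoidAlgebra.single (permEmbed n r hr hrn σ) ((Equiv.Perm.sign σ : ℤ) : ℂ)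

/-- A permutation of `Fin m`, viewed as an element of the transformation monoid. -/
def permToEnd (m : ℕ) : Equiv.Perm (Fin m) →* Function.End (Fin m) where
  toFun σ := ⇑σ
  map_one' := rfl
  map_mul' := fun _ _ => rfl

/-- The wedge product of a family of `r` vectors, as an element of the `r`-th
exterior power. -/
noncomputable def wedge {M : Type} [AddCommGroup M] [Module ℂ M] (r : ℕ) (v : Fin r → M) :
    ⋀[ℂ]^r M :=
  ⟨ExteriorAlgebra.ιMulti ℂ r v, ExteriorAlgebra.ιMulti_range ℂ r ⟨v, rfl⟩⟩

/-- The basis `w_1, …, w_n` of `ℂ^n`: `w_i = v_i - v_n` for `i < n` and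
`w_n = v_1 + ⋯ + v_n`. -/
noncomputable def wBasis (n : ℕ) : Fin n → (Fin n → ℂ) :=
  fun i => if h : (i : ℕ) < n - 1
    then Pi.single i 1 - Pi.single (⟨n - 1, by omega⟩ : Fin n) 1
    else ∑ j, Pi.single j 1

lemma wBasis_mem_aug (n : ℕ) (i : Fin n) (h : (i : ℕ) < n - 1) : wBasis n i ∈ Aug n := by
  show ∑ j, wBasis n i j = 0
  simp [wBasis, h, Finset.sum_sub_distrib, Finset.sum_pi_single]

/-- The vectors `w_i = v_i - v_n` (for `i < n`) as elements of the augmentation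
submodule; junk value `0` otherwise. -/
noncomputable def wAug (n : ℕ) : Fin n → ↥(Aug n) :=
  fun i => if h : (i : ℕ) < n - 1 then ⟨wBasis n i, wBasis_mem_aug n i h⟩ else 0

/-- The trivial representation of the full transformation monoid on `ℂ`. -/
noncomputable def trivRep (n : ℕ) : Representation ℂ (Function.End (Fin n)) ℂ := 1

/-- `projDimLE R M k` : the `R`-module `M` admits a projective resolution of length
at most `k`, i.e. has projective dimension at most `k`. -/
def projDimLE (R : Type) [Ring R] (M : Type) [AddCommMonoid M] [Module R M] (k : ℕ) : Prop :=
  ∃ (P : ℕ → ModuleCat.{0} R) (d : (i : ℕ) → (P (i + 1) →ₗ[R] P i)) (π : P 0 →ₗ[R] M),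
    (∀ i, Module.Projective R (P i)) ∧
    Function.Surjective π ∧
    LinearMap.ker π = LinearMap.range (d 0) ∧
    (∀ i, LinearMap.ker (d i) = LinearMap.range (d (i + 1))) ∧
    (∀ i, k < i → Subsingleton (P i))

/-- The sign character of `S_n`, extended by zero to all of `T_n`. -/
noncomputable def sgnExt (n : ℕ) (f : Function.End (Fin n)) : ℂ :=
  @dite ℂ (Function.Bijective f) (Fintype.decidableBijectiveFintype f)
    (fun h => ((Equiv.Perm.sign (Equiv.ofBijective f h) : ℤ) : ℂ)) (fun _ => 0)

section AuxProofs

lemma natRep_apply_eq (n : ℕ) (f : Function.End (Fin n)) (x : Fin n → ℂ) (j : Fin n) :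
    natRep n f x j = ∑ i, if f i = j then x i else 0 := rfl

lemma natRep_single (n : ℕ) (f : Function.End (Fin n)) (i : Fin n) :
    natRep n f (Pi.single i 1) = Pi.single (f i) 1 := by
  funext j
  rw [natRep_apply_eq, Finset.sum_eq_single i (fun k _ hk => by simp [Pi.single_apply, hk])
    (by simp)]
  simp [Pi.single_apply, eq_comm]

lemma wedge_coe {M : Type} [AddCommGroup M] [Module ℂ M] (r : ℕ) (v : Fin r → M) :
    (wedge r v : ExteriorAlgebra ℂ M) = ExteriorAlgebra.ιMulti ℂ r v := rfl

lemma extMap_wedge {M N : Type} [AddCommGroup M] [Module ℂ M] [AddCommGroup N] [Module ℂ N]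
    (r : ℕ) (f : M →ₗ[ℂ] N) (v : Fin r → M) :
    extMap r f (wedge r v) = wedge r (fun i => f (v i)) := by
  apply Subtype.ext
  show (ExteriorAlgebra.map f) (ExteriorAlgebra.ιMulti ℂ r v) = _
  rw [ExteriorAlgebra.map_apply_ιMulti]
  rfl

lemma extMap_extMap {M N P : Type} [AddCommGroup M] [Module ℂ M] [AddCommGroup N] [Module ℂ N]
    [AddCommGroup P] [Module ℂ P] (r : ℕ) (f : N →ₗ[ℂ] P) (g : M →ₗ[ℂ] N) (x : ⋀[ℂ]^r M) :
    extMap r f (extMap r g x) = extMap r (f ∘ₗ g) x := by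
  apply Subtype.ext
  show (ExteriorAlgebra.map f) ((ExteriorAlgebra.map g) x.1)
      = (ExteriorAlgebra.map (f ∘ₗ g)) x.1
  rw [← ExteriorAlgebra.map_comp_map]
  rfl

lemma wedge_span (M : Type) [AddCommGroup M] [Module ℂ M] (r : ℕ) :
    Submodule.span ℂ (Set.range (wedge (M := M) r)) = ⊤ := by
  rw [Submodule.eq_top_iff']
  suffices H : ∀ (x : ExteriorAlgebra ℂ M)
      (_ : x ∈ Submodule.span ℂ (Set.range (ExteriorAlgebra.ιMulti ℂ r (M := M))))
      (h : x ∈ ⋀[ℂ]^r M),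
      (⟨x, h⟩ : ↥(⋀[ℂ]^r M)) ∈ Submodule.span ℂ (Set.range (wedge (M := M) r)) by
    rintro ⟨x, hx⟩
    exact H x (by rw [ExteriorAlgebra.ιMulti_span_fixedDegree]; exact hx) hx
  intro x hx
  induction hx using Submodule.span_induction with
  | mem y hy =>
      intro h
      obtain ⟨v, rfl⟩ := hy
      exact Submodule.subset_span ⟨v, Subtype.ext rfl⟩
  | zero =>
      intro h
      exact (show (⟨0, h⟩ : ↥(⋀[ℂ]^r M)) = 0 from rfl) ▸ Submodule.zero_mem _
  | add y z hy hz ihy ihz =>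
      intro h
      have hy' : y ∈ ⋀[ℂ]^r M := by
        rw [← ExteriorAlgebra.ιMulti_span_fixedDegree]; exact hy
      have hz' : z ∈ ⋀[ℂ]^r M := by
        rw [← ExteriorAlgebra.ιMulti_span_fixedDegree]; exact hz
      exact (show (⟨y + z, h⟩ : ↥(⋀[ℂ]^r M)) = ⟨y, hy'⟩ + ⟨z, hz'⟩ from rfl) ▸
        Submodule.add_mem _ (ihy hy') (ihz hz')
  | smul a y hy ihy =>
      intro h
      have hy' : y ∈ ⋀[ℂ]^r M := by
        rw [← ExteriorAlgebra.ιMulti_span_fixedDegree]; exact hy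
      exact (show (⟨a • y, h⟩ : ↥(⋀[ℂ]^r M)) = a • (⟨y, hy'⟩ : ↥(⋀[ℂ]^r M)) from rfl) ▸
        Submodule.smul_mem _ a (ihy hy')

/-- The vector `v_{k+1}` for `k : Fin (r-1)`, as an index in `Fin n`. -/
def emb (n r : ℕ) (hrn : r < n) (k : Fin (r - 1)) : Fin n :=
  ⟨(k : ℕ) + 1, by have := k.isLt; omega⟩

@[simp] lemma emb_val (n r : ℕ) (hrn : r < n) (k : Fin (r - 1)) :
    (emb n r hrn k : ℕ) = (k : ℕ) + 1 := rfl

/-- The index `0` of `Fin n`. -/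
def zf (n r : ℕ) (hrn : r < n) : Fin n := ⟨0, by omega⟩

@[simp] lemma zf_val (n r : ℕ) (hrn : r < n) : (zf n r hrn : ℕ) = 0 := rfl

/-- The vector `v_{k+1} - v_0`. -/
noncomputable def uvec (n r : ℕ) (hrn : r < n) (k : Fin (r - 1)) : Fin n → ℂ :=
  Pi.single (emb n r hrn k) 1 - Pi.single (zf n r hrn) 1

lemma natRep_eIdem (n r : ℕ) (hr : 1 ≤ r) (hrn : r < n) (x : Fin n → ℂ) (hx : x ∈ Aug n) :
    natRep n (eIdem n r) x = ∑ k : Fin (r - 1), x (emb n r hrn k) • uvec n r hrn k := by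
  have hxs : ∑ i, x i = 0 := hx
  funext j
  have hRHS : (∑ k : Fin (r - 1), x (emb n r hrn k) • uvec n r hrn k) j
      = ∑ k : Fin (r - 1), x (emb n r hrn k) * (uvec n r hrn k j) := by
    simp [Finset.sum_apply]
  rw [hRHS, natRep_apply_eq]
  by_cases hj0 : (j : ℕ) = 0
  · -- case j = 0
    have hterm : ∀ i : Fin n, (if eIdem n r i = j then x i else 0)
        = x i - (if 0 < (i : ℕ) ∧ (i : ℕ) < r then x i else 0) := by
      intro i
      by_cases hc : 0 < (i : ℕ) ∧ (i : ℕ) < r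
      · have hne : eIdem n r i ≠ j := by
          simp only [eIdem, dif_pos hc.2]
          intro hij
          have := congrArg Fin.val hij
          omega
        rw [if_pos hc, if_neg hne, sub_self]
      · rw [if_neg hc, sub_zero, if_pos]
        by_cases hpos : 0 < (i : ℕ)
        · have hge : r ≤ (i : ℕ) := by omega
          simp only [eIdem, dif_neg (by omega : ¬ (i : ℕ) < r)]
          exact Fin.ext (by simp [hj0])
        · have hlt : (i : ℕ) < r := by omega
          simp only [eIdem, dif_pos hlt]
          exact Fin.ext (by omega)
    rw [Finset.sum_congr rfl (fun i _ => hterm i), Finset.sum_sub_distrib, hxs, zero_sub]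
    have hu : ∀ k : Fin (r - 1), uvec n r hrn k j = -1 := by
      intro k
      have h1 : ¬ j = emb n r hrn k := by
        intro h; have := congrArg Fin.val h; simp [hj0] at this
      have h2 : j = zf n r hrn := Fin.ext (by simpa using hj0)
      have h3 : ¬ zf n r hrn = emb n r hrn k := by
        intro h; have := congrArg Fin.val h; simp at this
      simp [uvec, Pi.single_apply, h1, h2, h3]
    have hRHS2 : ∑ k : Fin (r - 1), x (emb n r hrn k) * uvec n r hrn k j
        = -∑ k : Fin (r - 1), x (emb n r hrn k) := by
      rw [← Finset.sum_neg_distrib]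
      exact Finset.sum_congr rfl fun k _ => by rw [hu k, mul_neg_one]
    rw [hRHS2, neg_inj]
    -- reindex
    have hinj : ∀ a ∈ Finset.univ, ∀ b ∈ Finset.univ,
        emb n r hrn a = emb n r hrn b → a = b := by
      intro a _ b _ h
      have := congrArg Fin.val h
      exact Fin.ext (by simpa using this)
    calc ∑ i : Fin n, (if 0 < (i : ℕ) ∧ (i : ℕ) < r then x i else 0)
        = ∑ i ∈ Finset.image (emb n r hrn) Finset.univ,
            (if 0 < (i : ℕ) ∧ (i : ℕ) < r then x i else 0) := by
          refine (Finset.sum_subset (Finset.subset_univ _) fun i _ hi => ?_).symm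
          rw [if_neg]
          intro hc
          exact hi (Finset.mem_image.mpr ⟨⟨(i : ℕ) - 1, by omega⟩, Finset.mem_univ _,
            Fin.ext (by simp; omega)⟩)
      _ = ∑ k : Fin (r - 1),
            (if 0 < ((emb n r hrn k : Fin n) : ℕ) ∧ ((emb n r hrn k : Fin n) : ℕ) < r
              then x (emb n r hrn k) else 0) := Finset.sum_image hinj
      _ = ∑ k : Fin (r - 1), x (emb n r hrn k) := by
          refine Finset.sum_congr rfl fun k _ => if_pos ⟨by simp, by have := k.isLt; simp; omega⟩
  · by_cases hjr : (j : ℕ) < r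
    · -- case 0 < j < r
      have hiff : ∀ i : Fin n, (eIdem n r i = j) ↔ i = j := by
        intro i
        by_cases hi : (i : ℕ) < r
        · simp only [eIdem, dif_pos hi]
        · simp only [eIdem, dif_neg hi]
          constructor
          · intro h; have := congrArg Fin.val h; simp at this; omega
          · intro h; rw [h] at hi; exact absurd hjr hi
      rw [Finset.sum_congr rfl (fun i _ => if_congr (hiff i) rfl rfl),
        Finset.sum_ite_eq' Finset.univ j x, if_pos (Finset.mem_univ _)]
      have hj' : (j : ℕ) - 1 < r - 1 := by omega
      set j' : Fin (r - 1) := ⟨(j : ℕ) - 1, hj'⟩ with hj'def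
      have hembj' : emb n r hrn j' = j := Fin.ext (by simp [hj'def]; omega)
      have hterm : ∀ k : Fin (r - 1),
          x (emb n r hrn k) * uvec n r hrn k j = if k = j' then x j else 0 := by
        intro k
        have h2 : ¬ j = zf n r hrn := by
          intro h; have := congrArg Fin.val h; simp [hj0] at this
        have h3 : (j = emb n r hrn k) ↔ k = j' := by
          constructor
          · intro h
            have := congrArg Fin.val h
            simp at this
            exact Fin.ext (by simp [hj'def]; omega)
          · intro h; rw [h, hembj']
        have h4 : uvec n r hrn k j = if k = j' then 1 else 0 := by
          simp only [uvec, Pi.sub_apply, Pi.single_apply, if_neg h2, sub_zero]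
          by_cases hk : k = j'
          · rw [if_pos (h3.mpr hk), if_pos hk]
          · rw [if_neg (fun hh => hk (h3.mp hh)), if_neg hk]
        rw [h4, mul_ite, mul_one, mul_zero]
        by_cases hk : k = j'
        · rw [if_pos hk, if_pos hk, hk, hembj']
        · rw [if_neg hk, if_neg hk]
      rw [Finset.sum_congr rfl (fun k _ => hterm k),
        Finset.sum_ite_eq' Finset.univ j' (fun _ => x j), if_pos (Finset.mem_univ _)]
    · -- case r ≤ j
      have hL : ∀ i : Fin n, eIdem n r i ≠ j := by
        intro i h
        by_cases hi : (i : ℕ) < r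
        · simp only [eIdem, dif_pos hi] at h
          have := congrArg Fin.val h; omega
        · simp only [eIdem, dif_neg hi] at h
          have := congrArg Fin.val h; simp at this; omega
      rw [Finset.sum_eq_zero (fun i _ => if_neg (hL i))]
      refine (Finset.sum_eq_zero fun k _ => ?_).symm
      have h1 : ¬ j = emb n r hrn k := by
        intro h; have := congrArg Fin.val h; have := k.isLt; simp at *; omega
      have h2 : ¬ j = zf n r hrn := by
        intro h; have := congrArg Fin.val h; simp [hj0] at this
      simp [uvec, Pi.single_apply, h1, h2]

lemma wedge_natRep_eIdem_zero (n r : ℕ) (hr : 1 ≤ r) (hrn : r < n) (v : Fin r → ↥(Aug n)) :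
    wedge r (fun i => natRep n (eIdem n r) ((v i : Fin n → ℂ))) = 0 := by
  apply Subtype.ext
  show ExteriorAlgebra.ιMulti ℂ r (fun i => natRep n (eIdem n r) ((v i : Fin n → ℂ))) = 0
  have hexp : (fun i => natRep n (eIdem n r) ((v i : Fin n → ℂ)))
      = fun i => ∑ k : Fin (r - 1), ((v i : Fin n → ℂ) (emb n r hrn k)) • uvec n r hrn k :=
    funext fun i => natRep_eIdem n r hr hrn _ (v i).2
  rw [hexp]
  rw [show (ExteriorAlgebra.ιMulti ℂ r
        (fun i => ∑ k : Fin (r - 1), ((v i : Fin n → ℂ) (emb n r hrn k)) • uvec n r hrn k)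
      : ExteriorAlgebra ℂ (Fin n → ℂ))
      = (ExteriorAlgebra.ιMulti ℂ r (M := Fin n → ℂ)).toMultilinearMap
        (fun i => ∑ k : Fin (r - 1), ((v i : Fin n → ℂ) (emb n r hrn k)) • uvec n r hrn k)
      from rfl]
  rw [MultilinearMap.map_sum]
  refine Finset.sum_eq_zero fun g _ => ?_
  rw [MultilinearMap.map_smul_univ]
  obtain ⟨a, b, hab, hgab⟩ := Fintype.exists_ne_map_eq_of_card_lt g (by simp; omega)
  rw [show ((ExteriorAlgebra.ιMulti ℂ r (M := Fin n → ℂ)).toMultilinearMap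
        (fun i => uvec n r hrn (g i)) : ExteriorAlgebra ℂ (Fin n → ℂ))
      = ExteriorAlgebra.ιMulti ℂ r (fun i => uvec n r hrn (g i)) from rfl]
  rw [AlternatingMap.map_eq_zero_of_eq _ _ (by rw [hgab]) hab, smul_zero]

end AuxProofs

set_option maxHeartbeats 1000000 in
set_option synthInstance.maxHeartbeats 1000000 in
/-- For `n ≥ 2` and `1 ≤ r < n`, the short exact sequence
`0 → Λ^r(Aug(ℂ^n)) → Λ^r(ℂ^n) → Λ^{r−1}(Aug(ℂ^n)) → 0` of `ℂ[T_n]`-modules does not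
split; equivalently, `Λ^r(Aug(ℂ^n))` is not a direct summand of `Λ^r(ℂ^n)` as a
`ℂ[T_n]`-module: there is no `T_n`-equivariant linear projection of `Λ^r(ℂ^n)` onto
the image of `Λ^r(Aug(ℂ^n))`. -/
theorem exteriorPower_sequence_not_split (n r : ℕ) (hn : 2 ≤ n) (hr : 1 ≤ r) (hrn : r < n) :
    ¬ ∃ p : ↥(⋀[ℂ]^r (Fin n → ℂ)) →ₗ[ℂ] ↥(⋀[ℂ]^r (Fin n → ℂ)),
        p.comp p = p ∧
        LinearMap.range p = LinearMap.range (extMap r (Aug n).subtype) ∧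
        ∀ f : Function.End (Fin n), p.comp (extRep n r f) = (extRep n r f).comp p := by
  rintro ⟨p, _hidem, hrange, hcomm⟩
  have hrle : r ≤ n := le_of_lt hrn
  have hrep : ∀ (f : Function.End (Fin n)) (x : ↥(⋀[ℂ]^r (Fin n → ℂ))),
      extRep n r f x = extMap r (natRep n f) x := fun f x => rfl
  set std : Fin r → (Fin n → ℂ) := fun i => Pi.single (Fin.castLE hrle i) 1 with hstd
  set ω : ↥(⋀[ℂ]^r (Fin n → ℂ)) := wedge r std with hω
  -- `ρ(e)` kills the image of `⋀^r Aug`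
  have hkill : ∀ y : ↥(⋀[ℂ]^r (↥(Aug n))),
      extMap r ((natRep n (eIdem n r)) ∘ₗ (Aug n).subtype) y = 0 := by
    have h0 : extMap r ((natRep n (eIdem n r)) ∘ₗ (Aug n).subtype)
        = (0 : ↥(⋀[ℂ]^r (↥(Aug n))) →ₗ[ℂ] ↥(⋀[ℂ]^r (Fin n → ℂ))) := by
      apply LinearMap.ext_on (wedge_span (↥(Aug n)) r)
      rintro _ ⟨v, rfl⟩
      show extMap r ((natRep n (eIdem n r)) ∘ₗ (Aug n).subtype) (wedge r v) = 0
      rw [extMap_wedge]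
      exact wedge_natRep_eIdem_zero n r hr hrn v
    intro y; rw [h0]; rfl
  -- kill ω
  have hpω : p ω = 0 := by
    have h1 : extRep n r (eIdem n r) ω = ω := by
      rw [hrep, hω, extMap_wedge]
      congr 1
      funext i
      show natRep n (eIdem n r) (std i) = std i
      rw [hstd]
      rw [natRep_single]
      have he : eIdem n r (Fin.castLE hrle i) = Fin.castLE hrle i := by
        have hlt : ((Fin.castLE hrle i : Fin n) : ℕ) < r := i.isLt
        simp only [eIdem, dif_pos hlt]
      rw [he]
    obtain ⟨y, hy⟩ : p ω ∈ LinearMap.range (extMap r (Aug n).subtype) :=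
      hrange ▸ LinearMap.mem_range_self p ω
    calc p ω = p (extRep n r (eIdem n r) ω) := by rw [h1]
      _ = extRep n r (eIdem n r) (p ω) := LinearMap.congr_fun (hcomm (eIdem n r)) ω
      _ = extMap r (natRep n (eIdem n r)) (extMap r (Aug n).subtype y) := by
          rw [hrep, ← hy]
      _ = extMap r ((natRep n (eIdem n r)) ∘ₗ (Aug n).subtype) y := extMap_extMap r _ _ y
      _ = 0 := hkill y
  -- p kills wedges of standard basis vectors
  have hbasis : ∀ g : Fin r → Fin n, p (wedge r (fun i => Pi.single (g i) (1 : ℂ))) = 0 := by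
    intro g
    set f : Function.End (Fin n) :=
      fun k => if h : (k : ℕ) < r then g ⟨(k : ℕ), h⟩ else g ⟨0, hr⟩ with hf
    have h1 : extRep n r f ω = wedge r (fun i => Pi.single (g i) 1) := by
      rw [hrep, hω, extMap_wedge]
      congr 1
      funext i
      show natRep n f (std i) = Pi.single (g i) 1
      rw [hstd, natRep_single]
      have he : f (Fin.castLE hrle i) = g i := by
        have hi : ((Fin.castLE hrle i : Fin n) : ℕ) < r := i.isLt
        rw [hf]
        simp only [dif_pos hi]
        exact congrArg g (Fin.ext rfl)
      rw [he]
    rw [← h1]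
    have h2 := LinearMap.congr_fun (hcomm f) ω
    simp only [LinearMap.comp_apply] at h2
    rw [h2, hpω, map_zero]
  -- hence p = 0
  have hp0 : p = 0 := by
    apply LinearMap.ext_on (wedge_span (Fin n → ℂ) r)
    rintro _ ⟨v, rfl⟩
    show p (wedge r v) = 0
    have hv : v = fun i => ∑ j : Fin n, v i j • (Pi.single j (1 : ℂ) : Fin n → ℂ) := by
      funext i a
      simp only [Finset.sum_apply, Pi.smul_apply, Pi.single_apply, smul_eq_mul, mul_ite,
        mul_one, mul_zero]
      rw [Finset.sum_ite_eq Finset.univ a (fun j => v i j), if_pos (Finset.mem_univ _)]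
    have hexp : wedge (M := Fin n → ℂ) r v
        = ∑ g : Fin r → Fin n, (∏ i, v i (g i)) • wedge r (fun i => Pi.single (g i) (1 : ℂ)) := by
      apply Subtype.ext
      rw [AddSubmonoidClass.coe_finset_sum]
      show ExteriorAlgebra.ιMulti ℂ r v = _
      conv_lhs => rw [hv]
      rw [show (ExteriorAlgebra.ιMulti ℂ r
            (fun i => ∑ j : Fin n, v i j • (Pi.single j (1 : ℂ) : Fin n → ℂ))
          : ExteriorAlgebra ℂ (Fin n → ℂ))
          = (ExteriorAlgebra.ιMulti ℂ r (M := Fin n → ℂ)).toMultilinearMap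
            (fun i => ∑ j : Fin n, v i j • (Pi.single j (1 : ℂ) : Fin n → ℂ)) from rfl]
      rw [MultilinearMap.map_sum]
      refine Finset.sum_congr rfl fun g _ => ?_
      rw [MultilinearMap.map_smul_univ]
      rfl
    rw [hexp, map_sum]
    simp [hbasis]
  -- contradiction: the image of `⋀^r Aug` contains a nonzero element
  have hlast : n - 1 < n := by omega
  set lastI : Fin n := ⟨n - 1, hlast⟩ with hlastI
  set u : Fin r → (Fin n → ℂ) :=
    fun i => Pi.single (Fin.castLE hrle i) 1 - Pi.single lastI 1 with hu
  have humem : ∀ i, u i ∈ Aug n := by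
    intro i
    show ∑ j, u i j = 0
    simp [hu, Finset.sum_sub_distrib, Pi.single_apply, Finset.sum_ite_eq' Finset.univ]
  have hz : extMap r (Aug n).subtype (wedge r (fun i => (⟨u i, humem i⟩ : ↥(Aug n))))
      = wedge r u := by
    rw [extMap_wedge]
    rfl
  have hmem : wedge (M := Fin n → ℂ) r u ∈ LinearMap.range p := by
    rw [hrange]
    exact ⟨_, hz⟩
  obtain ⟨w, hw⟩ := hmem
  rw [hp0] at hw
  have hwu : wedge (M := Fin n → ℂ) r u = 0 := by rw [← hw]; rfl
  have hcoe : ExteriorAlgebra.ιMulti ℂ r u = 0 := congrArg Subtype.val hwu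
  set A : (Fin n → ℂ) [⋀^Fin r]→ₗ[ℂ] ℂ :=
    (Matrix.detRowAlternating).compLinearMap (LinearMap.funLeft ℂ ℂ (Fin.castLE hrle)) with hA
  have hAu : A u = 1 := by
    rw [hA, AlternatingMap.compLinearMap_apply]
    have hmat : (fun i => (LinearMap.funLeft ℂ ℂ (Fin.castLE hrle)) (u i))
        = (1 : Matrix (Fin r) (Fin r) ℂ) := by
      funext i j
      show u i (Fin.castLE hrle j) = (1 : Matrix (Fin r) (Fin r) ℂ) i j
      have h1 : (Fin.castLE hrle j = Fin.castLE hrle i) ↔ (j = i) := by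
        constructor
        · intro h; exact Fin.ext (by simpa using congrArg Fin.val h)
        · intro h; rw [h]
      have h2 : ¬ Fin.castLE hrle j = lastI := by
        intro h
        have := congrArg Fin.val h
        have hj := j.isLt
        simp [hlastI] at this
        omega
      simp [hu, Pi.single_apply, h1, h2, Matrix.one_apply, eq_comm]
    rw [hmat]
    show Matrix.det (1 : Matrix (Fin r) (Fin r) ℂ) = 1
    exact Matrix.det_one
  have hlift := congrArg (ExteriorAlgebra.liftAlternating
      (Function.update (fun _ => 0) r A)) hcoe
  rw [map_zero, ExteriorAlgebra.liftAlternating_apply_ιMulti] at hlift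
  rw [Function.update_self] at hlift
  rw [hAu] at hlift
  exact one_ne_zero hlift
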